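/- Let 𝒟 be a neighborhood closed collection of families of nonempty subsets of X. If Φ has a 𝒟-pullback attractor 𝒜 ∈ 𝒟, then Φ has a closed measurable 𝒟-pullback absorbing set K ∈ 𝒟 (in particular, for each ω₁ and x ∈ X, ω₂ ↦ d(x,K(ω₁,ω₂)) is measurable with respect to the P-completion of ℱ₂). -/

import Mathlib

open MeasureTheory Filter Set Topology
open scoped ENNReal

namespace RDS

/-- A group of transformations of `α` parametrized by `ℝ`. -/
def IsGroupAction {α : Type*} (θ : ℝ → α → α) : Prop :=
  (∀ a, θ 0 a = a) ∧ ∀ s t : ℝ, ∀ a, θ (s + t) a = θ t (θ s a)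

variable {Ω₁ Ω₂ X : Type*} [MetricSpace X] [MeasurableSpace X] [MeasurableSpace Ω₂]

/-- A continuous cocycle on `X` over the parametric dynamical systems
`(Ω₁, θ₁)` and `(Ω₂, ℱ₂, P, θ₂)` (Definition 2.1). -/
structure IsCocycle (θ₁ : ℝ → Ω₁ → Ω₁) (θ₂ : ℝ → Ω₂ → Ω₂)
    (Φ : ℝ → Ω₁ → Ω₂ → X → X) : Prop where
  measurable : ∀ ω₁ : Ω₁,
    Measurable fun p : {t : ℝ // 0 ≤ t} × Ω₂ × X => Φ p.1.1 ω₁ p.2.1 p.2.2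
  map_zero : ∀ (ω₁ : Ω₁) (ω₂ : Ω₂) (x : X), Φ 0 ω₁ ω₂ x = x
  cocycle : ∀ t τ : ℝ, 0 ≤ t → 0 ≤ τ → ∀ (ω₁ : Ω₁) (ω₂ : Ω₂) (x : X),
    Φ (t + τ) ω₁ ω₂ x = Φ t (θ₁ τ ω₁) (θ₂ τ ω₂) (Φ τ ω₁ ω₂ x)
  continuous : ∀ t : ℝ, 0 ≤ t → ∀ (ω₁ : Ω₁) (ω₂ : Ω₂),
    Continuous fun x : X => Φ t ω₁ ω₂ x

/-- A complete orbit of the cocycle `Φ` (Definition 2.9). -/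
def IsCompleteOrbit (θ₁ : ℝ → Ω₁ → Ω₁) (θ₂ : ℝ → Ω₂ → Ω₂)
    (Φ : ℝ → Ω₁ → Ω₂ → X → X) (ψ : ℝ → Ω₁ → Ω₂ → X) : Prop :=
  ∀ t τ : ℝ, 0 ≤ t → ∀ (ω₁ : Ω₁) (ω₂ : Ω₂),
    Φ t (θ₁ τ ω₁) (θ₂ τ ω₂) (ψ τ ω₁ ω₂) = ψ (t + τ) ω₁ ω₂

/-- A `𝒟`-complete orbit of `Φ`. -/
def IsDCompleteOrbit (θ₁ : ℝ → Ω₁ → Ω₁) (θ₂ : ℝ → Ω₂ → Ω₂)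
    (Φ : ℝ → Ω₁ → Ω₂ → X → X) (𝒟 : Set (Ω₁ → Ω₂ → Set X))
    (ψ : ℝ → Ω₁ → Ω₂ → X) : Prop :=
  IsCompleteOrbit θ₁ θ₂ Φ ψ ∧
    ∃ D ∈ 𝒟, ∀ (t : ℝ) (ω₁ : Ω₁) (ω₂ : Ω₂), ψ t ω₁ ω₂ ∈ D (θ₁ t ω₁) (θ₂ t ω₂)

/-- Positive invariance of a family under `Φ`. -/
def PositivelyInvariant (θ₁ : ℝ → Ω₁ → Ω₁) (θ₂ : ℝ → Ω₂ → Ω₂)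
    (Φ : ℝ → Ω₁ → Ω₂ → X → X) (B : Ω₁ → Ω₂ → Set X) : Prop :=
  ∀ t : ℝ, 0 ≤ t → ∀ (ω₁ : Ω₁) (ω₂ : Ω₂),
    Φ t ω₁ ω₂ '' B ω₁ ω₂ ⊆ B (θ₁ t ω₁) (θ₂ t ω₂)

/-- Invariance of a family under `Φ`. -/
def Invariant (θ₁ : ℝ → Ω₁ → Ω₁) (θ₂ : ℝ → Ω₂ → Ω₂)
    (Φ : ℝ → Ω₁ → Ω₂ → X → X) (B : Ω₁ → Ω₂ → Set X) : Prop :=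
  ∀ t : ℝ, 0 ≤ t → ∀ (ω₁ : Ω₁) (ω₂ : Ω₂),
    Φ t ω₁ ω₂ '' B ω₁ ω₂ = B (θ₁ t ω₁) (θ₂ t ω₂)

/-- Quasi-invariance of a family under `Φ`. -/
def QuasiInvariant (θ₁ : ℝ → Ω₁ → Ω₁) (θ₂ : ℝ → Ω₂ → Ω₂)
    (Φ : ℝ → Ω₁ → Ω₂ → X → X) (B : Ω₁ → Ω₂ → Set X) : Prop :=
  ∀ y : Ω₁ → Ω₂ → X, (∀ (ω₁ : Ω₁) (ω₂ : Ω₂), y ω₁ ω₂ ∈ B ω₁ ω₂) →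
    ∃ ψ : ℝ → Ω₁ → Ω₂ → X, IsCompleteOrbit θ₁ θ₂ Φ ψ ∧
      (∀ (ω₁ : Ω₁) (ω₂ : Ω₂), ψ 0 ω₁ ω₂ = y ω₁ ω₂) ∧
      ∀ (t : ℝ) (ω₁ : Ω₁) (ω₂ : Ω₂), ψ t ω₁ ω₂ ∈ B (θ₁ t ω₁) (θ₂ t ω₂)

/-- The Ω-limit set of a family `B` (Definition 2.13). -/
def omegaLimit (θ₁ : ℝ → Ω₁ → Ω₁) (θ₂ : ℝ → Ω₂ → Ω₂)
    (Φ : ℝ → Ω₁ → Ω₂ → X → X) (B : Ω₁ → Ω₂ → Set X) (ω₁ : Ω₁) (ω₂ : Ω₂) : Set X :=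
  ⋂ τ ∈ Ici (0 : ℝ), closure (⋃ t ∈ Ici τ,
    Φ t (θ₁ (-t) ω₁) (θ₂ (-t) ω₂) '' B (θ₁ (-t) ω₁) (θ₂ (-t) ω₂))

/-- `𝒟` is a collection of families of nonempty subsets of `X`. -/
def FamiliesOfNonemptySets (𝒟 : Set (Ω₁ → Ω₂ → Set X)) : Prop :=
  ∀ D ∈ 𝒟, ∀ (ω₁ : Ω₁) (ω₂ : Ω₂), (D ω₁ ω₂).Nonempty

/-- Neighborhood closedness of the collection `𝒟` (Definition 2.5). -/
def NeighborhoodClosed (𝒟 : Set (Ω₁ → Ω₂ → Set X)) : Prop :=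
  ∀ D ∈ 𝒟, ∃ ε : ℝ, 0 < ε ∧ ∀ B : Ω₁ → Ω₂ → Set X,
    (∀ (ω₁ : Ω₁) (ω₂ : Ω₂), (B ω₁ ω₂).Nonempty ∧
      B ω₁ ω₂ ⊆ Metric.thickening ε (D ω₁ ω₂)) → B ∈ 𝒟

/-- Inclusion closedness of the collection `𝒟`. -/
def InclusionClosed (𝒟 : Set (Ω₁ → Ω₂ → Set X)) : Prop :=
  ∀ D ∈ 𝒟, ∀ B : Ω₁ → Ω₂ → Set X,
    (∀ (ω₁ : Ω₁) (ω₂ : Ω₂), (B ω₁ ω₂).Nonempty ∧ B ω₁ ω₂ ⊆ D ω₁ ω₂) → B ∈ 𝒟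

/-- `𝒟`-pullback asymptotic compactness of `Φ` (Definition 2.16). -/
def AsymptoticallyCompact (θ₁ : ℝ → Ω₁ → Ω₁) (θ₂ : ℝ → Ω₂ → Ω₂)
    (Φ : ℝ → Ω₁ → Ω₂ → X → X) (𝒟 : Set (Ω₁ → Ω₂ → Set X)) : Prop :=
  ∀ (ω₁ : Ω₁) (ω₂ : Ω₂), ∀ B ∈ 𝒟, ∀ (t : ℕ → ℝ) (x : ℕ → X),
    Tendsto t atTop atTop →
    (∀ n, x n ∈ B (θ₁ (-t n) ω₁) (θ₂ (-t n) ω₂)) →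
    ∃ (φ : ℕ → ℕ) (y : X), StrictMono φ ∧
      Tendsto (fun n => Φ (t (φ n)) (θ₁ (-t (φ n)) ω₁) (θ₂ (-t (φ n)) ω₂) (x (φ n)))
        atTop (𝓝 y)

/-- The Hausdorff semi-metric `d(C,B) = sup_{x ∈ C} inf_{b ∈ B} d(x,b)`,
valued in `ℝ≥0∞`. -/
noncomputable def hausSemidist (C B : Set X) : ℝ≥0∞ :=
  ⨆ x ∈ C, EMetric.infEdist x B

/-- The family `A` pullback attracts the family `B` under `Φ`. -/
def Attracts (θ₁ : ℝ → Ω₁ → Ω₁) (θ₂ : ℝ → Ω₂ → Ω₂)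
    (Φ : ℝ → Ω₁ → Ω₂ → X → X) (B A : Ω₁ → Ω₂ → Set X) : Prop :=
  ∀ (ω₁ : Ω₁) (ω₂ : Ω₂),
    Tendsto (fun t : ℝ => hausSemidist
        (Φ t (θ₁ (-t) ω₁) (θ₂ (-t) ω₂) '' B (θ₁ (-t) ω₁) (θ₂ (-t) ω₂)) (A ω₁ ω₂))
      atTop (𝓝 0)

/-- A `𝒟`-pullback absorbing set for `Φ` (Definition 2.15). -/
def IsAbsorbingSet (θ₁ : ℝ → Ω₁ → Ω₁) (θ₂ : ℝ → Ω₂ → Ω₂)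
    (Φ : ℝ → Ω₁ → Ω₂ → X → X) (𝒟 : Set (Ω₁ → Ω₂ → Set X))
    (K : Ω₁ → Ω₂ → Set X) : Prop :=
  K ∈ 𝒟 ∧ ∀ (ω₁ : Ω₁) (ω₂ : Ω₂), ∀ B ∈ 𝒟, ∃ T : ℝ, 0 < T ∧ ∀ t : ℝ, T ≤ t →
    Φ t (θ₁ (-t) ω₁) (θ₂ (-t) ω₂) '' B (θ₁ (-t) ω₁) (θ₂ (-t) ω₂) ⊆ K ω₁ ω₂

/-- A closed measurable (w.r.t. the `P`-completion of `ℱ₂`) `𝒟`-pullback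
absorbing set for `Φ`. -/
def IsClosedMeasurableAbsorbingSet (θ₁ : ℝ → Ω₁ → Ω₁) (θ₂ : ℝ → Ω₂ → Ω₂)
    (Φ : ℝ → Ω₁ → Ω₂ → X → X) (P : Measure Ω₂) (𝒟 : Set (Ω₁ → Ω₂ → Set X))
    (K : Ω₁ → Ω₂ → Set X) : Prop :=
  IsAbsorbingSet θ₁ θ₂ Φ 𝒟 K ∧
    (∀ (ω₁ : Ω₁) (ω₂ : Ω₂), IsClosed (K ω₁ ω₂) ∧ (K ω₁ ω₂).Nonempty) ∧
    ∀ (ω₁ : Ω₁) (x : X), NullMeasurable (fun ω₂ => Metric.infDist x (K ω₁ ω₂)) P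


/-- Auxiliary: the `infEdist` to the closure of a `δ`-thickening computed via a
dense sequence. -/
lemma aux_infEdist_closure_thickening {X : Type*} [MetricSpace X]
    (e : ℕ → X) (he : DenseRange e) {δ : ℝ} {A : Set X}
    (hA : A.Nonempty) (x : X) :
    EMetric.infEdist x (closure (Metric.thickening δ A)) =
      ⨅ n, if Metric.infDist (e n) A < δ then edist x (e n) else ⊤ := by
  rw [show @EMetric.infEdist = @Metric.infEDist from rfl, EMetric.infEdist_closure]
  apply le_antisymm
  · refine le_iInf fun n => ?_
    split_ifs with h
    · exact EMetric.infEdist_le_edist_of_mem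
        ((Metric.mem_thickening_iff_infDist_lt hA).2 h)
    · exact le_top
  · refine ENNReal.le_of_forall_pos_le_add fun ε hε hlt => ?_
    set ε' : ℝ := (ε : ℝ) / 2 with hε'
    have hε'pos : 0 < ε' := by positivity
    have h1 : EMetric.infEdist x (Metric.thickening δ A) <
        EMetric.infEdist x (Metric.thickening δ A) + ENNReal.ofReal ε' :=
      ENNReal.lt_add_right hlt.ne (ENNReal.ofReal_pos.2 hε'pos).ne'
    obtain ⟨y, hy, hxy⟩ := EMetric.infEdist_lt_iff.1 h1
    obtain ⟨r, hr, hball⟩ := Metric.isOpen_iff.1 Metric.isOpen_thickening y hy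
    obtain ⟨n, hn⟩ := Metric.denseRange_iff.1 he y (min r ε') (lt_min hr hε'pos)
    have hen : e n ∈ Metric.thickening δ A :=
      hball (Metric.mem_ball'.2 (hn.trans_le (min_le_left _ _)))
    have hcond : Metric.infDist (e n) A < δ :=
      (Metric.mem_thickening_iff_infDist_lt hA).1 hen
    calc ⨅ m, (if Metric.infDist (e m) A < δ then edist x (e m) else ⊤)
        ≤ (if Metric.infDist (e n) A < δ then edist x (e n) else ⊤) := iInf_le _ n
      _ = edist x (e n) := by rw [if_pos hcond]
      _ ≤ edist x y + edist y (e n) := edist_triangle _ _ _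
      _ ≤ (EMetric.infEdist x (Metric.thickening δ A) + ENNReal.ofReal ε')
            + ENNReal.ofReal ε' := by
          refine add_le_add hxy.le ?_
          rw [edist_dist]
          exact ENNReal.ofReal_le_ofReal (hn.trans_le (min_le_right _ _)).le
      _ = EMetric.infEdist x (Metric.thickening δ A) + (ε : ℝ≥0∞) := by
          rw [add_assoc, ← ENNReal.ofReal_add hε'pos.le hε'pos.le]
          norm_num [hε', ENNReal.ofReal_coe_nnreal]

/-- A `𝒟`-pullback attractor for `Φ` (Definition 2.17). -/
structure IsPullbackAttractor (θ₁ : ℝ → Ω₁ → Ω₁) (θ₂ : ℝ → Ω₂ → Ω₂)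
    (Φ : ℝ → Ω₁ → Ω₂ → X → X) (P : Measure Ω₂) (𝒟 : Set (Ω₁ → Ω₂ → Set X))
    (A : Ω₁ → Ω₂ → Set X) : Prop where
  mem : A ∈ 𝒟
  compact : ∀ (ω₁ : Ω₁) (ω₂ : Ω₂), IsCompact (A ω₁ ω₂)
  measurable : ∀ (ω₁ : Ω₁) (x : X),
    NullMeasurable (fun ω₂ => Metric.infDist x (A ω₁ ω₂)) P
  invariant : Invariant θ₁ θ₂ Φ A
  attracts : ∀ B ∈ 𝒟, Attracts θ₁ θ₂ Φ B A

theorem attractor_implies_absorbing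
    {Ω₁ Ω₂ X : Type*} [Nonempty Ω₁]
    [MetricSpace X] [CompleteSpace X] [SecondCountableTopology X]
    [MeasurableSpace X] [BorelSpace X]
    [MeasurableSpace Ω₂] (P : Measure Ω₂) [IsProbabilityMeasure P]
    (θ₁ : ℝ → Ω₁ → Ω₁) (θ₂ : ℝ → Ω₂ → Ω₂)
    (hθ₁ : IsGroupAction θ₁) (hθ₂ : IsGroupAction θ₂)
    (hθ₂meas : Measurable fun p : ℝ × Ω₂ => θ₂ p.1 p.2)
    (hθ₂pres : ∀ t : ℝ, MeasurePreserving (θ₂ t) P P)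
    (Φ : ℝ → Ω₁ → Ω₂ → X → X)
    (hΦ : IsCocycle θ₁ θ₂ Φ)
    (𝒟 : Set (Ω₁ → Ω₂ → Set X))
    (h𝒟ne : FamiliesOfNonemptySets 𝒟)
    (h𝒟nc : NeighborhoodClosed 𝒟)
    (A : Ω₁ → Ω₂ → Set X)
    (hA : IsPullbackAttractor θ₁ θ₂ Φ P 𝒟 A) :
    ∃ K : Ω₁ → Ω₂ → Set X, IsClosedMeasurableAbsorbingSet θ₁ θ₂ Φ P 𝒟 K := by
  obtain ⟨ε, hε, hnc⟩ := h𝒟nc A hA.mem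
  set δ : ℝ := ε / 2 with hδdef
  have hδ : 0 < δ := by positivity
  have hδε : δ < ε := by simpa [hδdef] using half_lt_self hε
  set K : Ω₁ → Ω₂ → Set X :=
    fun ω₁ ω₂ => closure (Metric.thickening δ (A ω₁ ω₂)) with hKdef
  have hAne : ∀ (ω₁ : Ω₁) (ω₂ : Ω₂), (A ω₁ ω₂).Nonempty := h𝒟ne A hA.mem
  have hKne : ∀ (ω₁ : Ω₁) (ω₂ : Ω₂), (K ω₁ ω₂).Nonempty := fun ω₁ ω₂ =>
    ((hAne ω₁ ω₂).mono
      ((Metric.self_subset_thickening hδ _).trans subset_closure))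
  have hKsub : ∀ (ω₁ : Ω₁) (ω₂ : Ω₂),
      K ω₁ ω₂ ⊆ Metric.thickening ε (A ω₁ ω₂) := fun ω₁ ω₂ =>
    (closure_minimal (Metric.thickening_subset_cthickening δ _)
      Metric.isClosed_cthickening).trans
      (Metric.cthickening_subset_thickening' hε hδε _)
  have hKmem : K ∈ 𝒟 := hnc K fun ω₁ ω₂ => ⟨hKne ω₁ ω₂, hKsub ω₁ ω₂⟩
  have hthicksub : ∀ (ω₁ : Ω₁) (ω₂ : Ω₂),
      Metric.thickening δ (A ω₁ ω₂) ⊆ K ω₁ ω₂ := fun ω₁ ω₂ => subset_closure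
  refine ⟨K, ⟨⟨hKmem, ?_⟩, fun ω₁ ω₂ => ⟨isClosed_closure, hKne ω₁ ω₂⟩, ?_⟩⟩
  · -- absorbing
    intro ω₁ ω₂ B hB
    have htend := hA.attracts B hB ω₁ ω₂
    have hev : ∀ᶠ t : ℝ in atTop,
        hausSemidist (Φ t (θ₁ (-t) ω₁) (θ₂ (-t) ω₂) ''
          B (θ₁ (-t) ω₁) (θ₂ (-t) ω₂)) (A ω₁ ω₂) < ENNReal.ofReal δ :=
      htend.eventually (IsOpen.mem_nhds isOpen_Iio (ENNReal.ofReal_pos.2 hδ))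
    obtain ⟨a, ha⟩ := eventually_atTop.1 hev
    refine ⟨max a 1, lt_of_lt_of_le zero_lt_one (le_max_right _ _),
      fun t ht => ?_⟩
    have ht' := ha t (le_trans (le_max_left _ _) ht)
    intro y hy
    refine hthicksub ω₁ ω₂ (Metric.mem_thickening_iff_infEdist_lt.2 ?_)
    calc EMetric.infEdist y (A ω₁ ω₂)
        ≤ hausSemidist (Φ t (θ₁ (-t) ω₁) (θ₂ (-t) ω₂) ''
            B (θ₁ (-t) ω₁) (θ₂ (-t) ω₂)) (A ω₁ ω₂) :=
          le_iSup₂ (f := fun z (_ : z ∈ _) => EMetric.infEdist z (A ω₁ ω₂)) y hy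
      _ < ENNReal.ofReal δ := ht'
  · -- measurability
    intro ω₁ x
    rcases isEmpty_or_nonempty Ω₂ with hΩ | hΩ
    · exact (Subsingleton.measurable).nullMeasurable
    · have hXne : Nonempty X :=
        ⟨(hAne ω₁ (Classical.arbitrary Ω₂)).choose⟩
      set e : ℕ → X := TopologicalSpace.denseSeq X with hedef
      have he : DenseRange e := TopologicalSpace.denseRange_denseSeq X
      set F : Ω₂ → ℝ≥0∞ := fun ω₂ =>
        ⨅ n, if Metric.infDist (e n) (A ω₁ ω₂) < δ then edist x (e n) else ⊤
        with hFdef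
      have hterm : ∀ n : ℕ, NullMeasurable (fun ω₂ =>
          if Metric.infDist (e n) (A ω₁ ω₂) < δ then edist x (e n)
          else (⊤ : ℝ≥0∞)) P := by
        intro n
        have hg : Measurable fun r : ℝ =>
            if r < δ then edist x (e n) else (⊤ : ℝ≥0∞) :=
          Measurable.ite measurableSet_Iio measurable_const measurable_const
        exact MeasureTheory.Measurable.comp_nullMeasurable hg (hA.measurable ω₁ (e n))
      have hF : NullMeasurable F P :=
        (Measurable.iInf (fun n => (hterm n).measurable') :
          @Measurable (NullMeasurableSpace Ω₂ P) _ _ _ F)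
      have hfun : (fun ω₂ => Metric.infDist x (K ω₁ ω₂)) =
          fun ω₂ => (F ω₂).toReal := by
        funext ω₂
        rw [Metric.infDist, hKdef]
        exact congrArg ENNReal.toReal (aux_infEdist_closure_thickening e he (hAne ω₁ ω₂) x)
      rw [hfun]
      exact MeasureTheory.Measurable.comp_nullMeasurable (g := ENNReal.toReal) ENNReal.measurable_toReal hF



end RDS
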